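/- The group of Hopf algebra automorphisms of the 4-dimensional Sweedler Hopf algebra H₄ over a field k (char k ≠ 2) is isomorphic to the multiplicative group k*; explicitly, every Hopf automorphism fixes g and sends x to cx for some c ∈ k*. -/

import Mathlib

open TensorProduct

set_option maxHeartbeats 1000000 in
theorem sweedler_hopf_aut {k H : Type*} [Field k] (h2 : (2 : k) ≠ 0)
    [Ring H] [HopfAlgebra k H]
    (g x : H)
    (hbasis : ∃ b : Module.Basis (Fin 4) k H,
      b 0 = 1 ∧ b 1 = g ∧ b 2 = x ∧ b 3 = g * x)
    (hg2 : g * g = 1) (hx2 : x * x = 0) (hxg : x * g = -(g * x))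
    (hcomul_g : Coalgebra.comul (R := k) g = g ⊗ₜ[k] g)
    (hcomul_x : Coalgebra.comul (R := k) x = x ⊗ₜ[k] 1 + g ⊗ₜ[k] x)
    (hcounit_g : Coalgebra.counit (R := k) g = (1 : k))
    (hcounit_x : Coalgebra.counit (R := k) x = (0 : k)) :
    (∀ ψ : H ≃ₐ[k] H,
      (∀ a : H, Coalgebra.comul (R := k) (ψ a) =
        TensorProduct.map ψ.toLinearMap ψ.toLinearMap (Coalgebra.comul (R := k) a)) →
      (∀ a : H, Coalgebra.counit (R := k) (ψ a) = (Coalgebra.counit (R := k) a : k)) →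
      ψ g = g ∧ ∃! c : kˣ, ψ x = (c : k) • x) ∧
    (∀ c : kˣ, ∃ ψ : H ≃ₐ[k] H,
      (∀ a : H, Coalgebra.comul (R := k) (ψ a) =
        TensorProduct.map ψ.toLinearMap ψ.toLinearMap (Coalgebra.comul (R := k) a)) ∧
      (∀ a : H, Coalgebra.counit (R := k) (ψ a) = (Coalgebra.counit (R := k) a : k)) ∧
      ψ g = g ∧ ψ x = (c : k) • x) := by
  obtain ⟨b, hb0, hb1, hb2, hb3⟩ := hbasis
  -- basic product facts
  have hgx_g : (g * x) * g = -x := by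
    rw [mul_assoc, hxg, mul_neg, ← mul_assoc, hg2, one_mul]
  have hg_gx : g * (g * x) = x := by rw [← mul_assoc, hg2, one_mul]
  have hgx_x : (g * x) * x = 0 := by rw [mul_assoc, hx2, mul_zero]
  have hx_gx : x * (g * x) = 0 := by
    rw [← mul_assoc, hxg, neg_mul, mul_assoc, hx2, mul_zero, neg_zero]
  have hgx_gx : (g * x) * (g * x) = 0 := by rw [mul_assoc, hx_gx, mul_zero]
  -- comul and counit on 1 and gx
  have hcomul_one : Coalgebra.comul (R := k) (1 : H) = (1:H) ⊗ₜ[k] (1:H) := by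
    rw [Bialgebra.comul_one]; rfl
  have hcomul_gx : Coalgebra.comul (R := k) (g * x)
      = (g * x) ⊗ₜ[k] g + (1:H) ⊗ₜ[k] (g * x) := by
    rw [Bialgebra.comul_mul, hcomul_g, hcomul_x, mul_add,
      Algebra.TensorProduct.tmul_mul_tmul, Algebra.TensorProduct.tmul_mul_tmul,
      mul_one, hg2]
  have hcounit_one : Coalgebra.counit (R := k) (1 : H) = (1 : k) :=
    Bialgebra.counit_one
  have hcounit_gx : Coalgebra.counit (R := k) (g * x) = (0 : k) := by
    rw [Bialgebra.counit_mul, hcounit_g, hcounit_x, one_mul]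
  -- repr facts
  have r1 : b.repr (1:H) = Finsupp.single 0 1 := by rw [← hb0]; exact b.repr_self 0
  have rg : b.repr g = Finsupp.single 1 1 := by rw [← hb1]; exact b.repr_self 1
  have rx : b.repr x = Finsupp.single 2 1 := by rw [← hb2]; exact b.repr_self 2
  have rgx : b.repr (g*x) = Finsupp.single 3 1 := by rw [← hb3]; exact b.repr_self 3
  have trep : ∀ (u v : H) (p : Fin 4 × Fin 4),
      (b.tensorProduct b).repr (u ⊗ₜ[k] v) p = b.repr u p.1 * b.repr v p.2 := by
    rintro u v ⟨i, j⟩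
    rw [Module.Basis.tensorProduct_repr_tmul_apply, smul_eq_mul, mul_comm]
  have xne : x ≠ 0 := by
    intro h
    have := congrArg (fun z => b.repr z 2) h
    simp [rx] at this
  have gne : g ≠ 1 := by
    intro h
    have := congrArg (fun z => b.repr z 0) h
    simp [rg, r1, Finsupp.single_apply] at this
  constructor
  · intro ψ hcom hcou
    -- ψ g = g
    set r : Fin 4 → k := fun i => b.repr (ψ g) i with hr
    have hsum : ψ g = r 0 • (1:H) + r 1 • g + r 2 • x + r 3 • (g*x) := by
      conv_lhs => rw [← b.sum_repr (ψ g)]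
      rw [Fin.sum_univ_four, hb0, hb1, hb2, hb3]
    have E : r 0 • ((1:H) ⊗ₜ[k] (1:H)) + r 1 • (g ⊗ₜ[k] g)
        + r 2 • (x ⊗ₜ[k] (1:H) + g ⊗ₜ[k] x)
        + r 3 • ((g*x) ⊗ₜ[k] g + (1:H) ⊗ₜ[k] (g*x))
        = (ψ g) ⊗ₜ[k] (ψ g) := by
      rw [← hcomul_one, ← hcomul_g, ← hcomul_x, ← hcomul_gx,
        ← map_smul, ← map_smul, ← map_smul, ← map_smul, ← map_add, ← map_add, ← map_add,
        ← hsum, hcom g, hcomul_g]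
      rfl
    have coef : ∀ i j : Fin 4,
        r 0 * (b.repr 1 i * b.repr 1 j) + r 1 * (b.repr g i * b.repr g j)
        + (r 2 * (b.repr x i * b.repr 1 j) + r 2 * (b.repr g i * b.repr x j))
        + (r 3 * (b.repr (g*x) i * b.repr g j) + r 3 * (b.repr 1 i * b.repr (g*x) j))
        = r i * r j := by
      intro i j
      have := congrArg (fun z => (b.tensorProduct b).repr z (i, j)) E
      simpa [trep, smul_eq_mul, hr, mul_comm] using this
    have e00 := coef 0 0
    have e01 := coef 0 1
    have e02 := coef 0 2
    have e20 := coef 2 0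
    have e13 := coef 1 3
    have e31 := coef 3 1
    simp [r1, rg, rx, rgx, Finsupp.single_apply] at e00 e01 e02 e20 e13 e31
    have hc : r 0 + r 1 = 1 := by
      have := hcou g
      rw [hsum] at this
      simpa [hcounit_one, hcounit_g, hcounit_x, hcounit_gx] using this
    have hr2 : r 2 = 0 := by
      rcases e02 with h | h
      · rw [e20, h, mul_zero]
      · exact h
    have hr3 : r 3 = 0 := by
      rcases e13 with h | h
      · rw [e31, h, mul_zero]
      · exact h
    have hr0 : r 0 = 0 := by
      rcases e01 with h | h
      · exact h
      · exfalso
        have hr1' : r 1 = 0 := h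
        have hr0' : r 0 = 1 := by rw [← hc, hr1', add_zero]
        have : ψ g = 1 := by rw [hsum, hr0', hr1', hr2, hr3]; simp
        have : ψ g = ψ 1 := by rw [this, map_one]
        exact gne (ψ.injective this)
    have hr1 : r 1 = 1 := by rw [← hc, hr0, zero_add]
    have hψg : ψ g = g := by rw [hsum, hr0, hr1, hr2, hr3]; simp
    refine ⟨hψg, ?_⟩
    -- ψ x = c • x
    set s : Fin 4 → k := fun i => b.repr (ψ x) i with hs
    have hsumx : ψ x = s 0 • (1:H) + s 1 • g + s 2 • x + s 3 • (g*x) := by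
      conv_lhs => rw [← b.sum_repr (ψ x)]
      rw [Fin.sum_univ_four, hb0, hb1, hb2, hb3]
    have E2 : s 0 • ((1:H) ⊗ₜ[k] (1:H)) + s 1 • (g ⊗ₜ[k] g)
        + s 2 • (x ⊗ₜ[k] (1:H) + g ⊗ₜ[k] x)
        + s 3 • ((g*x) ⊗ₜ[k] g + (1:H) ⊗ₜ[k] (g*x))
        = (ψ x) ⊗ₜ[k] (1:H) + g ⊗ₜ[k] (ψ x) := by
      rw [← hcomul_one, ← hcomul_g, ← hcomul_x, ← hcomul_gx,
        ← map_smul, ← map_smul, ← map_smul, ← map_smul, ← map_add, ← map_add, ← map_add,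
        ← hsumx, hcom x, hcomul_x]
      simp only [map_add, TensorProduct.map_tmul]
      have h1 : ψ.toLinearMap (1:H) = 1 := map_one ψ
      have hgg : ψ.toLinearMap g = g := hψg
      have hxx : ψ.toLinearMap x = ψ x := rfl
      rw [h1, hgg, hxx]
    have coefx : ∀ i j : Fin 4,
        s 0 * (b.repr 1 i * b.repr 1 j) + s 1 * (b.repr g i * b.repr g j)
        + (s 2 * (b.repr x i * b.repr 1 j) + s 2 * (b.repr g i * b.repr x j))
        + (s 3 * (b.repr (g*x) i * b.repr g j) + s 3 * (b.repr 1 i * b.repr (g*x) j))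
        = s i * b.repr 1 j + b.repr g i * s j := by
      intro i j
      have := congrArg (fun z => (b.tensorProduct b).repr z (i, j)) E2
      simpa [trep, smul_eq_mul, hs, mul_comm] using this
    have f03 := coefx 0 3
    have f10 := coefx 1 0
    simp [r1, rg, rx, rgx, Finsupp.single_apply] at f03 f10
    -- anticommutation forces s 0 = 0
    have hA : ψ x * g = -(g * ψ x) := by
      calc ψ x * g = ψ x * ψ g := by rw [hψg]
        _ = ψ (x * g) := (map_mul ψ x g).symm
        _ = ψ (-(g * x)) := by rw [hxg]
        _ = -(ψ g * ψ x) := by rw [map_neg, map_mul]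
        _ = -(g * ψ x) := by rw [hψg]
    rw [hsumx] at hA
    simp only [add_mul, mul_add, smul_mul_assoc, mul_smul_comm, one_mul, mul_one,
      hxg, hg2, hgx_g, hg_gx, smul_neg, neg_add] at hA
    have q1 := congrArg (fun z => b.repr z 1) hA
    simp [r1, rg, rx, rgx, Finsupp.single_apply] at q1
    have hs0 : s 0 = 0 := by
      have h20 : (2:k) * s 0 = 0 := by linear_combination q1
      exact (mul_eq_zero.mp h20).resolve_left h2
    have hs1 : s 1 = 0 := by
      have := f10
      rw [hs0, add_zero] at this
      exact this.symm
    have hψx : ψ x = s 2 • x := by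
      rw [hsumx, hs0, hs1, f03]; simp
    have hs2 : s 2 ≠ 0 := by
      intro h
      apply xne
      apply ψ.injective
      rw [hψx, h, zero_smul, map_zero]
    refine ⟨Units.mk0 (s 2) hs2, by simpa using hψx, ?_⟩
    intro c hc
    apply Units.ext
    have hcc : (c : k) • x = s 2 • x := by rw [← hc, hψx]
    simpa using smul_left_injective k xne hcc
  · intro c
    set f : Fin 4 → H := ![1, g, (c:k) • x, (c:k) • (g*x)] with hf
    set f' : Fin 4 → H := ![1, g, ((c⁻¹:kˣ):k) • x, ((c⁻¹:kˣ):k) • (g*x)] with hf'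
    set φ : H →ₗ[k] H := b.constr k f with hφdef
    set φ' : H →ₗ[k] H := b.constr k f' with hφ'def
    have hφ1 : φ (1:H) = 1 := by rw [← hb0, hφdef, b.constr_basis]; simp [hf, hb0, hb1, hb2, hb3]
    have hφg : φ g = g := by rw [← hb1, hφdef, b.constr_basis]; simp [hf, hb0, hb1, hb2, hb3]
    have hφx : φ x = (c:k) • x := by rw [← hb2, hφdef, b.constr_basis]; simp [hf, hb0, hb1, hb2, hb3]
    have hφgx : φ (g*x) = (c:k) • (g*x) := by rw [← hb3, hφdef, b.constr_basis]; simp [hf, hb0, hb1, hb2, hb3]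
    have hφ'1 : φ' (1:H) = 1 := by rw [← hb0, hφ'def, b.constr_basis]; simp [hf', hb0, hb1, hb2, hb3]
    have hφ'g : φ' g = g := by rw [← hb1, hφ'def, b.constr_basis]; simp [hf', hb0, hb1, hb2, hb3]
    have hφ'x : φ' x = ((c⁻¹:kˣ):k) • x := by rw [← hb2, hφ'def, b.constr_basis]; simp [hf', hb0, hb1, hb2, hb3]
    have hφ'gx : φ' (g*x) = ((c⁻¹:kˣ):k) • (g*x) := by
      rw [← hb3, hφ'def, b.constr_basis]; simp [hf', hb0, hb1, hb2, hb3]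
    have hmul16 : ∀ i j : Fin 4, φ (b i * b j) = φ (b i) * φ (b j) := by
      intro i j
      fin_cases i <;> fin_cases j <;>
        simp [hb0, hb1, hb2, hb3, hφ1, hφg, hφx, hφgx, hg2, hx2, hxg, hgx_g, hg_gx,
          hgx_x, hx_gx, hgx_gx, smul_mul_assoc, mul_smul_comm, smul_smul]
    have hmulL : ∀ i : Fin 4,
        φ ∘ₗ LinearMap.mulLeft k (b i) = LinearMap.mulLeft k (φ (b i)) ∘ₗ φ := fun i =>
      b.ext fun j => by
        simp only [LinearMap.coe_comp, Function.comp_apply, LinearMap.mulLeft_apply]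
        exact hmul16 i j
    have hmulL' : ∀ (i : Fin 4) (v : H), φ (b i * v) = φ (b i) * φ v := by
      intro i v
      have h := DFunLike.congr_fun (hmulL i) v
      simpa only [LinearMap.coe_comp, Function.comp_apply, LinearMap.mulLeft_apply] using h
    have hmulR : ∀ v : H,
        φ ∘ₗ LinearMap.mulRight k v = LinearMap.mulRight k (φ v) ∘ₗ φ := fun v =>
      b.ext fun i => by
        simp only [LinearMap.coe_comp, Function.comp_apply, LinearMap.mulRight_apply]
        exact hmulL' i v
    have hmulφ : ∀ u v : H, φ (u * v) = φ u * φ v := by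
      intro u v
      have h := DFunLike.congr_fun (hmulR v) u
      simpa only [LinearMap.coe_comp, Function.comp_apply, LinearMap.mulRight_apply] using h
    have hinv1 : φ ∘ₗ φ' = LinearMap.id := by
      apply b.ext
      intro i
      fin_cases i <;>
        simp [hb0, hb1, hb2, hb3, hφ1, hφg, hφx, hφgx, hφ'1, hφ'g, hφ'x, hφ'gx, smul_smul]
    have hinv2 : φ' ∘ₗ φ = LinearMap.id := by
      apply b.ext
      intro i
      fin_cases i <;>
        simp [hb0, hb1, hb2, hb3, hφ1, hφg, hφx, hφgx, hφ'1, hφ'g, hφ'x, hφ'gx, smul_smul]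
    set e : H ≃ₗ[k] H := LinearEquiv.ofLinear φ φ' hinv1 hinv2 with he
    have he_apply : ∀ a : H, e a = φ a := fun a => rfl
    set ψ : H ≃ₐ[k] H := AlgEquiv.ofLinearEquiv e (by simpa [he_apply] using hφ1)
      (fun u v => by simpa [he_apply] using hmulφ u v) with hψdef
    have hψa : ∀ a : H, ψ a = φ a := fun a => rfl
    have hψlin : ∀ a : H, ψ.toLinearMap a = φ a := fun a => rfl
    have hψg : ψ g = g := by rw [hψa, hφg]
    have hψx : ψ x = (c:k) • x := by rw [hψa, hφx]
    refine ⟨ψ, ?_, ?_, hψg, hψx⟩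
    · intro a
      have h := b.ext (f₁ := (Coalgebra.comul (R := k)) ∘ₗ (ψ.toLinearMap : H →ₗ[k] H))
        (f₂ := (TensorProduct.map ψ.toLinearMap ψ.toLinearMap) ∘ₗ (Coalgebra.comul (R := k)))
        (fun i => by
          fin_cases i <;>
            simp [-map_mul, hψa, hb0, hb1, hb2, hb3, hψlin, hφ1, hφg, hφx, hφgx,
              hcomul_one, hcomul_g, hcomul_x, hcomul_gx, TensorProduct.map_tmul,
              TensorProduct.tmul_smul, TensorProduct.smul_tmul', smul_add])
      exact DFunLike.congr_fun h a
    · intro a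
      have h := b.ext (f₁ := (Coalgebra.counit (R := k)) ∘ₗ (ψ.toLinearMap : H →ₗ[k] H))
        (f₂ := (Coalgebra.counit (R := k)))
        (fun i => by
          fin_cases i <;>
            simp [-map_mul, hψa, hb0, hb1, hb2, hb3, hψlin, hφ1, hφg, hφx, hφgx,
              hcounit_one, hcounit_g, hcounit_x, hcounit_gx])
      exact DFunLike.congr_fun h a
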